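/- With S, a, L_z as above, fix k ≥ 0 and b ∈ S with b - k•a ∈ S. Define χ : L_{k•a} → L_b by letting χ(x) be the unique element of {x + m•a : m ∈ ℕ} ∩ L_b. Then χ is a bijection from L_{k•a} onto L_b. -/

import Mathlib

theorem stmt_9 (d r : ℕ) (S : AddSubmonoid (Fin d → ℤ)) (e : Fin r → (Fin d → ℤ))
    (hgen : S = AddSubmonoid.closure (Set.range e))
    (hgrp : ∀ x : Fin d → ℤ, ∃ s ∈ S, ∃ t ∈ S, x = s - t)
    (hne : (S : Set (Fin d → ℤ)) ≠ Set.univ)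
    (a : Fin d → ℤ) (ha : a = ∑ i, e i)
    (Lz : (Fin d → ℤ) → Set (Fin d → ℤ))
    (hLz : ∀ z : Fin d → ℤ, Lz z =
      ((fun s => s + z) '' (S : Set (Fin d → ℤ)) \
        (fun s => s + z + a) '' (S : Set (Fin d → ℤ))) ∩ (S : Set (Fin d → ℤ)))
    (k : ℕ) (b : Fin d → ℤ) (hb : b ∈ S) (hbk : b - k • a ∈ S)
    (χ : (Fin d → ℤ) → (Fin d → ℤ))
    (hχ : ∀ x ∈ Lz (k • a), (∃ m : ℕ, χ x = x + m • a) ∧ χ x ∈ Lz b) :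
    Set.BijOn χ (Lz (k • a)) (Lz b) := by
  classical
  have heS : ∀ i, e i ∈ S := by
    intro i; rw [hgen]; exact AddSubmonoid.subset_closure ⟨i, rfl⟩
  have haS : a ∈ S := ha ▸ sum_mem (fun i _ => heS i)
  have haeS : ∀ i, a - e i ∈ S := by
    intro i
    have h : a - e i = ∑ j ∈ Finset.univ.erase i, e j := by
      rw [ha, ← Finset.add_sum_erase _ _ (Finset.mem_univ i)]
      abel
    rw [h]; exact sum_mem fun j _ => heS j
  have hdom : ∀ s ∈ S, ∃ m : ℕ, (m • a) - s ∈ S := by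
    intro s hs
    rw [hgen] at hs
    induction hs using AddSubmonoid.closure_induction with
    | mem x hx =>
        obtain ⟨i, rfl⟩ := hx
        exact ⟨1, by rw [one_smul]; exact haeS i⟩
    | zero => exact ⟨0, by simpa using S.zero_mem⟩
    | add x y hx hy ihx ihy =>
        obtain ⟨m1, hm1⟩ := ihx
        obtain ⟨m2, hm2⟩ := ihy
        refine ⟨m1 + m2, ?_⟩
        have := S.add_mem hm1 hm2
        have e2 : (m1 • a - x) + (m2 • a - y) = (m1 + m2) • a - (x + y) := by
          rw [add_nsmul]; abel
        rwa [e2] at this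
  have memL : ∀ z x : Fin d → ℤ, x ∈ Lz z ↔ (x - z ∈ S ∧ x - z - a ∉ S ∧ x ∈ S) := by
    intro z x
    rw [hLz]
    simp only [Set.mem_inter_iff, Set.mem_diff, Set.mem_image, SetLike.mem_coe]
    constructor
    · rintro ⟨⟨⟨s, hs, rfl⟩, h2⟩, h3⟩
      refine ⟨by simpa using hs, ?_, h3⟩
      intro hc
      exact h2 ⟨s + z - z - a, hc, by abel⟩
    · rintro ⟨h1, h2, h3⟩
      refine ⟨⟨⟨x - z, h1, by abel⟩, ?_⟩, h3⟩
      rintro ⟨s, hs, rfl⟩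
      exact h2 (by rw [show s + z + a - z - a = s from by abel]; exact hs)
  have hxa : ∀ t : Fin d → ℤ, ∃ n : ℕ, t - n • a ∉ S := by
    intro t
    by_contra hc
    push_neg at hc
    apply hne
    refine Set.eq_univ_iff_forall.2 fun u => ?_
    obtain ⟨s, hs, s', hs', hu⟩ := hgrp (u - t)
    obtain ⟨m, hm⟩ := hdom s' hs'
    have h1 : u - t + m • a ∈ S := by
      have h := S.add_mem hs hm
      have e2 : s + (m • a - s') = u - t + m • a := by rw [hu]; abel
      rwa [e2] at h
    have h2 : t - m • a ∈ S := hc m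
    have h := S.add_mem h1 h2
    have e2 : (u - t + m • a) + (t - m • a) = u := by abel
    rwa [e2] at h
  -- uniqueness of the shift landing in Lz b
  have key : ∀ x m n, m < n → x + m • a ∈ Lz b → x + (n:ℕ) • a ∈ Lz b → False := by
    intro x m n hlt hm hn
    obtain ⟨j, rfl⟩ := Nat.exists_eq_add_of_lt hlt
    have h1 : x + m • a - b ∈ S := ((memL b _).1 hm).1
    have h2 : x + (m + j + 1) • a - b - a ∉ S := ((memL b _).1 hn).2.1
    apply h2
    have h3 := S.add_mem h1 (S.nsmul_mem haS j)
    have e2 : (x + m • a - b) + j • a = x + (m + j + 1) • a - b - a := by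
      rw [add_nsmul, add_nsmul, one_smul]; abel
    rwa [e2] at h3
  have uniq : ∀ x m n, x + m • a ∈ Lz b → x + (n:ℕ) • a ∈ Lz b → m = n := by
    intro x m n hm hn
    rcases lt_trichotomy m n with h | h | h
    · exact absurd (key x m n h hm hn) (not_false)
    · exact h
    · exact absurd (key x n m h hn hm) (not_false)
  -- injectivity helper
  have key2 : ∀ x1 ∈ Lz (k • a), ∀ x2 ∈ Lz (k • a), ∀ m1 m2 : ℕ, m1 < m2 →
      x1 + m1 • a = x2 + m2 • a → False := by
    intro x1 h1 x2 h2 m1 m2 hlt heq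
    obtain ⟨j, rfl⟩ := Nat.exists_eq_add_of_lt hlt
    have hx2 : x2 - k • a ∈ S := ((memL _ _).1 h2).1
    have hx1 : x1 - k • a - a ∉ S := ((memL _ _).1 h1).2.1
    apply hx1
    have h3 := S.add_mem hx2 (S.nsmul_mem haS j)
    have e2 : (x2 - k • a) + j • a = x1 - k • a - a := by
      have hx : x1 = x2 + (m1 + j + 1) • a - m1 • a := by rw [← heq]; abel
      rw [hx, add_nsmul, add_nsmul, one_smul]; abel
    rwa [e2] at h3
  refine ⟨fun x hx => (hχ x hx).2, ?_, ?_⟩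
  · -- InjOn
    intro x1 h1 x2 h2 heq
    obtain ⟨⟨m1, hm1⟩, _⟩ := hχ x1 h1
    obtain ⟨⟨m2, hm2⟩, _⟩ := hχ x2 h2
    have heq2 : x1 + m1 • a = x2 + m2 • a := by rw [← hm1, ← hm2, heq]
    rcases lt_trichotomy m1 m2 with h | h | h
    · exact absurd (key2 x1 h1 x2 h2 m1 m2 h heq2) (not_false)
    · subst h; exact add_right_cancel heq2
    · exact absurd (key2 x2 h2 x1 h1 m2 m1 h heq2.symm) (not_false)
  · -- SurjOn
    intro y hy
    obtain ⟨hyb, hyba, hyS⟩ := (memL b y).1 hy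
    have hyk : y - k • a ∈ S := by
      have h := S.add_mem hyb hbk
      have e2 : (y - b) + (b - k • a) = y - k • a := by abel
      rwa [e2] at h
    have hex : ∃ n : ℕ, y - k • a - n • a ∉ S := hxa (y - k • a)
    have hNpos : 0 < Nat.find hex :=
      (Nat.find_pos hex).2 (not_not.2 (by simpa using hyk))
    set n : ℕ := Nat.find hex - 1 with hn
    have hns : n + 1 = Nat.find hex := Nat.succ_pred_eq_of_pos hNpos
    have hQn : y - k • a - n • a ∈ S := by
      by_contra hc
      exact Nat.find_min hex (by omega) hc
    have hQn1 : y - k • a - (n + 1) • a ∉ S := by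
      rw [hns]; exact Nat.find_spec hex
    set x : Fin d → ℤ := y - n • a with hxdef
    have hxL : x ∈ Lz (k • a) := by
      rw [memL]
      refine ⟨by rw [hxdef]; convert hQn using 1; abel, ?_, ?_⟩
      · intro hc
        apply hQn1
        have e2 : x - k • a - a = y - k • a - (n + 1) • a := by
          rw [hxdef, add_nsmul, one_smul]; abel
        rwa [e2] at hc
      · have h := S.add_mem (by rw [hxdef]; convert hQn using 1; abel :
          x - k • a ∈ S) (S.nsmul_mem haS k)
        have e2 : (x - k • a) + k • a = x := by abel
        rwa [e2] at h
    refine ⟨x, hxL, ?_⟩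
    obtain ⟨⟨m, hm⟩, hmem⟩ := hχ x hxL
    have hyx : y = x + n • a := by rw [hxdef]; abel
    have hmn : m = n := by
      apply uniq x m n
      · rw [← hm]; exact hmem
      · rw [← hyx]; exact hy
    rw [hm, hmn, ← hyx]
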